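/- Theorem (paper Theorem 6.11, originally due to Gee–Kisin, stated in the conditional form established by the paper's proof). In the situation of the context, let 0 ≤ a_1 ≤ … ≤ a_d be the elementary divisor exponents of M̄, i.e. the integers appearing in a decomposition of the matrix of φ_{M̄} (in any basis) as X · diag(u^{a_1}, …, u^{a_d}) · Y with X, Y ∈ GL_d(k[[u]]). Suppose there is a k-linear endomorphism θ : M̄_HT → M̄_HT such that θ(Fil_n M̄_HT) ⊆ Fil_n M̄_HT for every n, θ induces multiplication by n̄ (the image of n in k) on Fil_n M̄_HT / Fil_{n−1} M̄_HT for every n, and the characteristic polynomial of θ equals ∏_{i=1}^d (X − r̄_i) for integers 0 ≤ r_1 ≤ … ≤ r_d (such θ exists by the paper's mod p filtered Sen theory when M̄ is the mod p reduction of the Breuil–Kisin module of a lattice in a crystalline representation of G_K with K unramified and Hodge–Tate weights r_1, …, r_d). Then for every element s of the prime field 𝔽_p ⊆ k one has #{i : a_i ≡ s (mod p)} = #{i : r_i ≡ s (mod p)}; i.e. the multisets {a_1, …, a_d} and {r_1, …, r_d} coincide modulo p. -/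

import Mathlib

/-!
Statement 11 (paper Theorem 6.11, originally due to Gee--Kisin), in the conditional
form established by the paper's proof.

Context: mod `p` Breuil--Kisin module `(M̄, φ_{M̄})` over `𝔖̄ = k[[u]]` (k perfect of
char `p`), with elementary divisor exponents `a_1 ≤ … ≤ a_d` coming from a
decomposition `A = X · diag(u^{a_i}) · Y` of the matrix of `φ_{M̄}`.  Given a
`k`-linear operator `θ` on `M̄_HT = M̄/uM̄` stabilizing the conjugate filtration,
inducing multiplication by `n̄` on its graded pieces, and with characteristic
polynomial `∏ (X - r̄_i)`, the multisets `{a_i}` and `{r_i}` agree modulo `p`.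
-/

open Submodule

noncomputable section

namespace ModPBK

variable {p : ℕ} [Fact p.Prime] {k : Type*} [Field k] [CharP k p]
variable {Mb : Type*} [AddCommGroup Mb] [Module (PowerSeries k) Mb]
variable [Module k Mb] [IsScalarTower k (PowerSeries k) Mb]

/-- `u^i M̄` as a submodule of `M̄`. -/
def uPowSub (i : ℕ) : Submodule (PowerSeries k) Mb :=
  LinearMap.range ((PowerSeries.X ^ i : PowerSeries k) •
    (LinearMap.id : Mb →ₗ[PowerSeries k] Mb))

variable {φ : PowerSeries k →+* PowerSeries k}

/-- `M̄*`, the `𝔖̄`-submodule generated by the image of `φ_{M̄}`. -/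
def star (φM : Mb →ₛₗ[φ] Mb) : Submodule (PowerSeries k) Mb :=
  Submodule.span (PowerSeries k) (Set.range φM)

/-- The conjugate filtration on `M̄_HT = M̄/uM̄`. -/
def filHT (φM : Mb →ₛₗ[φ] Mb) (n : ℕ) :
    Submodule (PowerSeries k) (Mb ⧸ (uPowSub 1 : Submodule (PowerSeries k) Mb)) :=
  Submodule.map (uPowSub 1 : Submodule (PowerSeries k) Mb).mkQ
    (Submodule.comap ((PowerSeries.X ^ n : PowerSeries k) •
      (LinearMap.id : Mb →ₗ[PowerSeries k] Mb)) (star φM))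

end ModPBK

open ModPBK

set_option maxHeartbeats 2000000 in
theorem elementary_divisors_mod_p
    {p : ℕ} [Fact p.Prime] {k : Type*} [Field k] [CharP k p]
    [ExpChar k p] [PerfectRing k p]
    (φ : PowerSeries k →+* PowerSeries k)
    (hφ : ∀ (f : PowerSeries k) (n : ℕ),
      PowerSeries.coeff (R := k) (p * n) (φ f) = (PowerSeries.coeff (R := k) n f) ^ p)
    (hφ' : ∀ (f : PowerSeries k) (m : ℕ), ¬ p ∣ m → PowerSeries.coeff (R := k) m (φ f) = 0)
    {Mb : Type*} [AddCommGroup Mb] [Module (PowerSeries k) Mb]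
    [Module k Mb] [IsScalarTower k (PowerSeries k) Mb]
    (d : ℕ) (bM : Module.Basis (Fin d) (PowerSeries k) Mb)
    (φM : Mb →ₛₗ[φ] Mb)
    (hinj : LinearIndependent (PowerSeries k) fun i => φM (bM i))
    (h : ℕ)
    (hcoker : ∀ m : Mb, (PowerSeries.X ^ h : PowerSeries k) • m ∈ star φM)
    -- elementary divisor exponents `a_i` of `M̄`
    (A : Matrix (Fin d) (Fin d) (PowerSeries k))
    (hA : ∀ j, φM (bM j) = ∑ i, A i j • bM i)
    (X Y : Matrix (Fin d) (Fin d) (PowerSeries k))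
    (hX : IsUnit X) (hY : IsUnit Y)
    (a : Fin d → ℕ) (ha : Monotone a)
    (hdec : A = X * Matrix.diagonal (fun i => (PowerSeries.X : PowerSeries k) ^ a i) * Y)
    -- the mod `p` Sen operator `θ` on `M̄_HT`
    (r : Fin d → ℕ) (hr : Monotone r)
    (θ : (Mb ⧸ (uPowSub 1 : Submodule (PowerSeries k) Mb)) →ₗ[k]
      (Mb ⧸ (uPowSub 1 : Submodule (PowerSeries k) Mb)))
    [Module.Finite k (Mb ⧸ (uPowSub 1 : Submodule (PowerSeries k) Mb))]
    (hstab : ∀ n : ℕ, ∀ x ∈ filHT φM n, θ x ∈ filHT φM n)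
    (hshift : ∀ n : ℕ, ∀ x ∈ filHT φM n,
      θ x - (n : k) • x ∈ (if n = 0 then ⊥ else filHT φM (n - 1)))
    (hchar : LinearMap.charpoly θ
      = ∏ i : Fin d, (Polynomial.X - Polynomial.C ((r i : k)))) :
    -- `{a_1, …, a_d} ≡ {r_1, …, r_d} (mod p)` as multisets
    ∀ s : ZMod p,
      (Finset.univ.filter (fun i : Fin d => ((a i : ZMod p) = s))).card
        = (Finset.univ.filter (fun i : Fin d => ((r i : ZMod p) = s))).card := by
  classical
  -- ### Setup: inverse matrices and the associated linear equivalences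
  obtain ⟨Xu, hXu⟩ := hX
  obtain ⟨Yu, hYu⟩ := hY
  have hXX' : X * (↑Xu⁻¹ : Matrix (Fin d) (Fin d) (PowerSeries k)) = 1 := by
    rw [← hXu]; exact Xu.mul_inv
  have hX'X : (↑Xu⁻¹ : Matrix (Fin d) (Fin d) (PowerSeries k)) * X = 1 := by
    rw [← hXu]; exact Xu.inv_mul
  have hYY' : Y * (↑Yu⁻¹ : Matrix (Fin d) (Fin d) (PowerSeries k)) = 1 := by
    rw [← hYu]; exact Yu.mul_inv
  have hY'Y : (↑Yu⁻¹ : Matrix (Fin d) (Fin d) (PowerSeries k)) * Y = 1 := by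
    rw [← hYu]; exact Yu.inv_mul
  set e : Mb ≃ₗ[PowerSeries k] Mb := Matrix.toLinOfInv bM bM hXX' hX'X with he
  set eY : Mb ≃ₗ[PowerSeries k] Mb := Matrix.toLinOfInv bM bM hYY' hY'Y with heY
  set bC : Module.Basis (Fin d) (PowerSeries k) Mb := bM.map e with hbC
  set D : Mb →ₗ[PowerSeries k] Mb :=
    Matrix.toLin bM bM (Matrix.diagonal fun i => (PowerSeries.X : PowerSeries k) ^ a i) with hD
  have hbCe : ∀ j, bC j = e (bM j) := fun j => by rw [hbC, Module.Basis.map_apply]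
  have hDb : ∀ j, D (bM j) = (PowerSeries.X : PowerSeries k) ^ a j • bM j := by
    intro j
    rw [hD, Matrix.toLin_self]
    rw [Finset.sum_eq_single j]
    · simp
    · intro i _ hij; simp [Matrix.diagonal_apply_ne _ hij]
    · simp
  -- ### `star φM` is the image under `e` of the range of the diagonal map `D`
  have hstar : star φM
      = Submodule.map (e : Mb →ₗ[PowerSeries k] Mb) (LinearMap.range D) := by
    have h1 : star φM = LinearMap.range (Matrix.toLin bM bM A) := by
      apply le_antisymm
      · unfold ModPBK.star
        rw [Submodule.span_le]
        rintro _ ⟨m, rfl⟩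
        have hm : φM m = Matrix.toLin bM bM A (∑ j, φ (bM.repr m j) • bM j) := by
          conv_lhs => rw [← bM.sum_repr m]
          rw [map_sum, map_sum]
          refine Finset.sum_congr rfl fun j _ => ?_
          rw [LinearMap.map_smulₛₗ, map_smul, Matrix.toLin_self, ← hA]
        rw [hm]; exact LinearMap.mem_range_self _ _
      · rintro _ ⟨x, rfl⟩
        have hx : Matrix.toLin bM bM A x = ∑ j, bM.repr x j • φM (bM j) := by
          conv_lhs => rw [← bM.sum_repr x]
          rw [map_sum]
          refine Finset.sum_congr rfl fun j _ => ?_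
          rw [map_smul, Matrix.toLin_self, ← hA]
        rw [hx]
        exact Submodule.sum_mem _ fun j _ =>
          Submodule.smul_mem _ _ (Submodule.subset_span ⟨bM j, rfl⟩ :
            φM (bM j) ∈ ModPBK.star φM)
    have h2 : Matrix.toLin bM bM A
        = (e : Mb →ₗ[PowerSeries k] Mb) ∘ₗ (D ∘ₗ Matrix.toLin bM bM Y) := by
      refine LinearMap.ext fun x => ?_
      rw [hdec, Matrix.toLin_mul bM bM bM, Matrix.toLin_mul bM bM bM]
      simp only [LinearMap.coe_comp, Function.comp_apply, LinearEquiv.coe_coe, he,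
        Matrix.toLinOfInv_apply, hD]
    have h3 : LinearMap.range (Matrix.toLin bM bM Y) = ⊤ := by
      rw [LinearMap.range_eq_top]
      intro m
      obtain ⟨z, hz⟩ := eY.surjective m
      refine ⟨z, ?_⟩
      rw [← hz, heY]
      rfl
    rw [h1, h2, LinearMap.range_comp, LinearMap.range_comp, h3, Submodule.map_top]
  -- ### basic facts about the quotient `M̄_HT`
  have hu1 : ∀ m : Mb, m ∈ (uPowSub 1 : Submodule (PowerSeries k) Mb) ↔
      ∃ m', (PowerSeries.X : PowerSeries k) • m' = m := by
    intro m
    simp [uPowSub, LinearMap.smul_apply, pow_one]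
  set π := (uPowSub 1 : Submodule (PowerSeries k) Mb).mkQ with hπ
  have hπ0 : ∀ m' : Mb, π ((PowerSeries.X : PowerSeries k) • m') = 0 := by
    intro m'
    rw [hπ, Submodule.mkQ_apply, Submodule.Quotient.mk_eq_zero]
    exact (hu1 _).2 ⟨m', rfl⟩
  have hCsmul : ∀ (c : k) (m : Mb), (PowerSeries.C (R := k) c) • m = c • m := by
    intro c m
    rw [← algebraMap_smul (PowerSeries k) c m]
    congr 1
  have hπsmul : ∀ (c : k) (m : Mb), π (c • m) = c • π m := by
    intro c m
    rw [← algebraMap_smul (PowerSeries k) c m, map_smul, algebraMap_smul]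
  have hred : ∀ m : Mb, π m
      = ∑ i, (PowerSeries.constantCoeff (R := k) (bC.repr m i)) • π (bC i) := by
    intro m
    conv_lhs => rw [← bC.sum_repr m]
    rw [map_sum]
    refine Finset.sum_congr rfl fun i _ => ?_
    set f := bC.repr m i with hf
    obtain ⟨t, ht⟩ : (PowerSeries.X : PowerSeries k)
        ∣ (f - PowerSeries.C (R := k) (PowerSeries.constantCoeff (R := k) f)) := by
      rw [PowerSeries.X_dvd_iff]; simp
    have hfe : f = PowerSeries.C (R := k) (PowerSeries.constantCoeff (R := k) f)
        + PowerSeries.X * t := by rw [← ht]; ring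
    calc π (f • bC i)
        = π ((PowerSeries.C (R := k) (PowerSeries.constantCoeff (R := k) f)) • bC i)
            + π ((PowerSeries.X : PowerSeries k) • (t • bC i)) := by
          rw [← map_add]
          congr 1
          rw [← mul_smul, ← add_smul, ← hfe]
      _ = (PowerSeries.constantCoeff (R := k) f) • π (bC i) := by
          rw [hπ0, add_zero, hCsmul, hπsmul]
  -- ### the induced `k`-basis of the quotient
  have hli : LinearIndependent k fun i => π (bC i) := by
    rw [Fintype.linearIndependent_iff]
    intro g hg i
    have h0 : π (∑ j, (PowerSeries.C (R := k) (g j)) • bC j) = 0 := by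
      rw [map_sum]
      have hterm : ∀ j, π ((PowerSeries.C (R := k) (g j)) • bC j) = g j • π (bC j) := fun j => by
        rw [hCsmul, hπsmul]
      simp_rw [hterm]
      exact hg
    rw [hπ, Submodule.mkQ_apply, Submodule.Quotient.mk_eq_zero] at h0
    obtain ⟨m', hm'⟩ := (hu1 _).1 h0
    have hco := congrArg (fun z => bC.repr z i) hm'
    simp only [map_smul, Finsupp.smul_apply, smul_eq_mul] at hco
    have hrs : bC.repr (∑ j, (PowerSeries.C (R := k) (g j)) • bC j) i = PowerSeries.C (R := k) (g i) :=
      congrFun (bC.repr_sum_self fun j => PowerSeries.C (R := k) (g j)) i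
    rw [hrs] at hco
    have hcc := congrArg (PowerSeries.constantCoeff (R := k)) hco
    simpa using hcc.symm
  have hspan : ⊤ ≤ Submodule.span k (Set.range fun i => π (bC i)) := by
    rintro x -
    obtain ⟨m, rfl⟩ := Submodule.mkQ_surjective _ x
    rw [← hπ, hred m]
    exact Submodule.sum_mem _ fun i _ =>
      Submodule.smul_mem _ _ (Submodule.subset_span ⟨i, rfl⟩)
  set bQ : Module.Basis (Fin d) k (Mb ⧸ (uPowSub 1 : Submodule (PowerSeries k) Mb)) :=
    Module.Basis.mk hli hspan with hbQdef
  have hbQ : ∀ i, bQ i = π (bC i) := fun i => by rw [hbQdef, Module.Basis.mk_apply]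
  -- ### upper bound for the conjugate filtration
  have hfil_le : ∀ n : ℕ, ∀ x, x ∈ filHT φM n →
      x ∈ Submodule.span k (⇑bQ '' {i | a i ≤ n}) := by
    intro n x hx
    obtain ⟨y, hy, rfl⟩ := hx
    have hy' : (PowerSeries.X : PowerSeries k) ^ n • y ∈ ModPBK.star φM := hy
    rw [hstar] at hy'
    obtain ⟨w, hw, hwe⟩ := hy'
    obtain ⟨z, rfl⟩ := hw
    -- compare coordinates
    have hDz : D z = ∑ j, ((PowerSeries.X : PowerSeries k) ^ a j * bM.repr z j) • bM j := by
      conv_lhs => rw [← bM.sum_repr z]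
      rw [map_sum]
      refine Finset.sum_congr rfl fun j _ => ?_
      rw [map_smul, hDb j, smul_smul, mul_comm]
    have h4 : (e : Mb →ₗ[PowerSeries k] Mb) (D z)
        = ∑ j, ((PowerSeries.X : PowerSeries k) ^ a j * bM.repr z j) • bC j := by
      rw [hDz]
      simp only [LinearEquiv.coe_coe, map_sum, map_smul]
      refine Finset.sum_congr rfl fun j _ => ?_
      rw [hbCe j]
    have hz : ∀ i, (PowerSeries.X : PowerSeries k) ^ n * bC.repr y i
        = (PowerSeries.X : PowerSeries k) ^ a i * bM.repr z i := by
      intro i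
      calc (PowerSeries.X : PowerSeries k) ^ n * bC.repr y i
          = bC.repr ((PowerSeries.X : PowerSeries k) ^ n • y) i := by
            rw [map_smul]; simp
        _ = bC.repr ((e : Mb →ₗ[PowerSeries k] Mb) (D z)) i := by rw [hwe]
        _ = (PowerSeries.X : PowerSeries k) ^ a i * bM.repr z i := by
            rw [h4]
            exact congrFun (bC.repr_sum_self _) i
    have hzero : ∀ i, n < a i → PowerSeries.constantCoeff (R := k) (bC.repr y i) = 0 := by
      intro i hi
      have h5 := hz i
      obtain ⟨q, hq⟩ : ∃ q, a i = n + 1 + q := ⟨a i - n - 1, by omega⟩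
      have h6 : (PowerSeries.X : PowerSeries k) ^ a i * bM.repr z i
          = (PowerSeries.X : PowerSeries k) ^ n * ((PowerSeries.X : PowerSeries k)
              * ((PowerSeries.X : PowerSeries k) ^ q * bM.repr z i)) := by
        rw [hq, pow_add, pow_add, pow_one]
        ring
      have h7 : bC.repr y i = (PowerSeries.X : PowerSeries k)
          * ((PowerSeries.X : PowerSeries k) ^ q * bM.repr z i) :=
        mul_left_cancel₀ (pow_ne_zero n PowerSeries.X_ne_zero) (h5.trans h6)
      rw [h7]
      simp
    rw [← hπ, hred y]
    refine Submodule.sum_mem _ fun i _ => ?_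
    by_cases hin : a i ≤ n
    · exact Submodule.smul_mem _ _ (Submodule.subset_span ⟨i, hin, hbQ i⟩)
    · rw [hzero i (lt_of_not_ge hin), zero_smul]
      exact Submodule.zero_mem _
  -- ### `bQ j` lies in the `a j`-th filtration step
  have hmem_fil : ∀ j, bQ j ∈ filHT φM (a j) := by
    intro j
    rw [hbQ j, hπ]
    refine Submodule.mem_map.2 ⟨bC j, ?_, rfl⟩
    rw [Submodule.mem_comap]
    have hid : ((PowerSeries.X : PowerSeries k) ^ a j
        • (LinearMap.id : Mb →ₗ[PowerSeries k] Mb)) (bC j)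
        = (PowerSeries.X : PowerSeries k) ^ a j • bC j := rfl
    rw [hid, hstar]
    refine Submodule.mem_map.2 ⟨(PowerSeries.X : PowerSeries k) ^ a j • bM j,
      ⟨bM j, hDb j⟩, ?_⟩
    simp only [LinearEquiv.coe_coe, map_smul]
    rw [hbCe j]
  -- ### triangularity of the matrix of `θ`
  have hwj : ∀ j, θ (bQ j) - ((a j : ℕ) : k) • bQ j
      ∈ Submodule.span k (⇑bQ '' {i | i < j}) := by
    intro j
    have hsh := hshift (a j) (bQ j) (hmem_fil j)
    by_cases h0 : a j = 0
    · rw [if_pos h0, Submodule.mem_bot] at hsh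
      rw [hsh]
      exact Submodule.zero_mem _
    · rw [if_neg h0] at hsh
      have hsub := hfil_le (a j - 1) _ hsh
      refine Submodule.span_mono (Set.image_mono ?_) hsub
      intro i hi
      simp only [Set.mem_setOf_eq] at hi ⊢
      by_contra hij
      have := ha (le_of_not_gt hij)
      omega
  set T := LinearMap.toMatrix bQ bQ θ with hTdef
  have hTij : ∀ i j, T i j = ((a j : ℕ) : k) * (bQ.repr (bQ j)) i
      + bQ.repr (θ (bQ j) - ((a j : ℕ) : k) • bQ j) i := by
    intro i j
    rw [hTdef, LinearMap.toMatrix_apply]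
    have hsplit : θ (bQ j) = ((a j : ℕ) : k) • bQ j
        + (θ (bQ j) - ((a j : ℕ) : k) • bQ j) := by abel
    conv_lhs => rw [hsplit]
    rw [map_add, map_smul]
    simp only [Module.Basis.repr_self, Finsupp.add_apply, Finsupp.smul_apply, smul_eq_mul,
      Finsupp.single_apply]
    all_goals split_ifs <;> ring
  have hrep0 : ∀ j i, ¬ i < j →
      bQ.repr (θ (bQ j) - ((a j : ℕ) : k) • bQ j) i = 0 := by
    intro j i hij
    have hsupp := (Module.Basis.mem_span_image bQ).1 (hwj j)
    by_contra hne
    exact hij (hsupp (Finsupp.mem_support_iff.2 hne))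
  have hdiagT : ∀ j, T j j = ((a j : ℕ) : k) := by
    intro j
    rw [hTij j j, hrep0 j j (lt_irrefl j), add_zero, Module.Basis.repr_self]
    simp
  have htri : T.BlockTriangular id := by
    intro i j hij
    have hij' : j < i := hij
    rw [hTij i j, hrep0 j i (lt_asymm hij'), add_zero, Module.Basis.repr_self,
      Finsupp.single_apply, if_neg (ne_of_lt hij'), mul_zero]
  -- ### the characteristic polynomial of `θ`
  have hcp : LinearMap.charpoly θ = ∏ i, (Polynomial.X - Polynomial.C ((a i : k))) := by
    rw [← LinearMap.charpoly_toMatrix θ bQ, ← hTdef,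
      Matrix.charpoly_of_upperTriangular T htri]
    exact Finset.prod_congr rfl fun i _ => by rw [hdiagT]
  -- ### comparing the two products of linear factors
  have e1 : ∀ f : Fin d → k,
      (∏ i : Fin d, (Polynomial.X - Polynomial.C (f i))).roots
        = Multiset.map f Finset.univ.val := by
    intro f
    rw [Finset.prod_eq_multiset_prod,
      show (fun i => Polynomial.X - Polynomial.C (f i))
        = (fun x : k => Polynomial.X - Polynomial.C x) ∘ f from rfl,
      ← Multiset.map_map, Polynomial.roots_multiset_prod_X_sub_C]
  have hprod : Multiset.map (fun i => ((a i : ℕ) : k)) Finset.univ.val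
      = Multiset.map (fun i => ((r i : ℕ) : k)) Finset.univ.val := by
    have h1 : (∏ i : Fin d, (Polynomial.X - Polynomial.C ((a i : k))))
        = ∏ i : Fin d, (Polynomial.X - Polynomial.C ((r i : k))) := by
      rw [← hcp, hchar]
    have h2 := congrArg Polynomial.roots h1
    rwa [e1, e1] at h2
  -- ### conclusion: counting residues
  intro s
  have hι : Function.Injective (ZMod.castHom (dvd_refl p) k) :=
    (ZMod.castHom (dvd_refl p) k).injective
  have key : ∀ m : ℕ, ((m : ZMod p) = s) ↔ ((m : k) = ZMod.castHom (dvd_refl p) k s) := by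
    intro m
    constructor
    · intro hm; rw [← hm, map_natCast]
    · intro hm; apply hι; rw [map_natCast, hm]
  have hcard : ∀ f : Fin d → ℕ,
      (Finset.univ.filter fun i : Fin d => ((f i : ZMod p) = s)).card
        = Multiset.count (ZMod.castHom (dvd_refl p) k s)
            (Multiset.map (fun i => ((f i : ℕ) : k)) Finset.univ.val) := by
    intro f
    rw [Multiset.count_map, Finset.card_def, Finset.filter_val]
    exact congrArg Multiset.card
      (Multiset.filter_congr fun i _ => by
        rw [key (f i)]
        exact eq_comm)
  rw [hcard a, hcard r, hprod]
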